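/- Let h ≤ H < Q be positive integers with Q ≪ x and H = o(x) as x → ∞, and let f, g' : ℕ → ℂ be essentially bounded. Then ∑_{1 ≤ a ≤ H} ∑_{h < q ≤ H} g'(q) ∑_{x < n ≤ x+h, n ≡ a mod q} f(n) = ( ∑_{h < q ≤ H} g'(q)·⌊H/q⌋ + ∑_{h < q ≤ H, {x/q} ≤ {H/q}} g'(q) ) · ∑_{x < n ≤ x+h} f(n) + O_ε(x^ε h²). -/

import Mathlib

open Finset Filter Asymptotics

/-- `f` is essentially bounded: for every `ε > 0`, `f n ≪_ε n^ε`. -/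
def EssBdd (f : ℕ → ℂ) : Prop :=
  ∀ ε : ℝ, 0 < ε → ∃ C : ℝ, ∀ n : ℕ, 1 ≤ n → ‖f n‖ ≤ C * (n : ℝ) ^ ε

section Aux

private lemma stepa (ε : ℝ) (hε : 0 < ε) (a : ℕ) :
    (a + 1 : ℝ) ≤ ((2:ℝ)^ε / (ε * Real.log 2)) * (2:ℝ) ^ ((a:ℝ) * ε) := by
  have hl2 : 0 < Real.log 2 := Real.log_pos (by norm_num)
  have hδ : 0 < ε * Real.log 2 := mul_pos hε hl2
  have ht : ε * Real.log 2 * (a + 1) ≤ Real.exp (ε * Real.log 2 * (a + 1)) :=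
    (Real.add_one_le_exp _).trans' (by linarith)
  have h2 : Real.exp (ε * Real.log 2 * (a + 1)) = (2:ℝ)^ε * (2:ℝ)^((a:ℝ)*ε) := by
    rw [Real.rpow_def_of_pos (by norm_num), Real.rpow_def_of_pos (by norm_num), ← Real.exp_add]
    ring_nf
  rw [div_mul_eq_mul_div, ← h2, le_div_iff₀ hδ]
  nlinarith [ht]

private lemma stepb (ε : ℝ) (hε : 0 < ε) (p a : ℕ) (hp : 2 ≤ p) :
    (a + 1 : ℝ) ≤ (if 2 ≤ (p:ℝ)^ε then 1 else max 1 ((2:ℝ)^ε / (ε * Real.log 2)))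
      * (p:ℝ) ^ ((a:ℝ) * ε) := by
  have hp0 : (0:ℝ) < p := by positivity
  have haε : 0 ≤ (a:ℝ) * ε := by positivity
  split_ifs with hcond
  · rw [one_mul]
    have h1 : (a + 1 : ℝ) ≤ (2:ℝ) ^ (a:ℕ) := by
      exact_mod_cast Nat.lt_two_pow_self (n := a)
    calc (a + 1 : ℝ) ≤ (2:ℝ) ^ (a:ℕ) := h1
      _ ≤ ((p:ℝ)^ε) ^ (a:ℕ) := by
          apply pow_le_pow_left₀ (by norm_num) hcond
      _ = (p:ℝ) ^ ((a:ℝ) * ε) := by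
          rw [← Real.rpow_natCast ((p:ℝ)^ε) a, ← Real.rpow_mul (le_of_lt hp0), mul_comm]
  · calc (a + 1 : ℝ) ≤ ((2:ℝ)^ε / (ε * Real.log 2)) * (2:ℝ) ^ ((a:ℝ) * ε) := stepa ε hε a
      _ ≤ max 1 ((2:ℝ)^ε / (ε * Real.log 2)) * (p:ℝ) ^ ((a:ℝ) * ε) := by
          apply mul_le_mul (le_max_right _ _)
            (Real.rpow_le_rpow (by norm_num) (by exact_mod_cast hp) haε)
            (by positivity) (le_trans zero_le_one (le_max_left _ _))

private lemma divisor_bound (ε : ℝ) (hε : 0 < ε) :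
    ∃ C : ℝ, 1 ≤ C ∧ ∀ n : ℕ, 1 ≤ n → (n.divisors.card : ℝ) ≤ C * (n:ℝ) ^ ε := by
  classical
  set M : ℝ := max 1 ((2:ℝ)^ε / (ε * Real.log 2)) with hM
  have hM1 : 1 ≤ M := le_max_left _ _
  set P : ℕ := ⌈(2:ℝ)^(1/ε)⌉₊ with hP
  refine ⟨M ^ (P + 1), hM1.trans (le_self_pow₀ hM1 (by omega)), ?_⟩
  intro n hn
  have hn0 : n ≠ 0 := by omega
  rw [Nat.card_divisors hn0]
  push_cast
  set c : ℕ → ℝ := fun p => if 2 ≤ (p:ℝ)^ε then 1 else M with hc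
  have hprod : (∏ p ∈ n.primeFactors, ((n.factorization p : ℝ) + 1))
      ≤ ∏ p ∈ n.primeFactors, (c p * (p:ℝ) ^ ((n.factorization p : ℝ) * ε)) := by
    apply Finset.prod_le_prod (fun p _ => by positivity)
    intro p hp
    exact stepb ε hε p _ (Nat.Prime.two_le (Nat.prime_of_mem_primeFactors hp))
  refine hprod.trans ?_
  rw [Finset.prod_mul_distrib]
  have h2 : (∏ p ∈ n.primeFactors, (p:ℝ) ^ ((n.factorization p : ℝ) * ε)) = (n:ℝ) ^ ε := by
    have e1 : ∀ p ∈ n.primeFactors, (p:ℝ) ^ ((n.factorization p : ℝ) * ε)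
        = ((p ^ n.factorization p : ℕ) : ℝ) ^ ε := by
      intro p hp
      have hp0 : (0:ℝ) ≤ p := by positivity
      push_cast
      rw [← Real.rpow_natCast (p:ℝ) (n.factorization p), ← Real.rpow_mul hp0]
    rw [Finset.prod_congr rfl e1, Real.finset_prod_rpow _ _ (fun p _ => by positivity)]
    congr 1
    rw [← Nat.cast_prod]
    congr 1
    conv_rhs => rw [← Nat.factorization_prod_pow_eq_self hn0]
    rfl
  rw [h2]
  apply mul_le_mul_of_nonneg_right _ (by positivity)
  have hsub : n.primeFactors.filter (fun p : ℕ => ¬ 2 ≤ (p:ℝ)^ε) ⊆ Finset.range (P+1) := by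
    intro p hp
    rw [Finset.mem_filter] at hp
    obtain ⟨hpf, hsmall⟩ := hp
    push_neg at hsmall
    have hp0 : (0:ℝ) ≤ p := by positivity
    have : (p:ℝ) < (2:ℝ)^(1/ε) := by
      have := Real.rpow_lt_rpow (by positivity) hsmall (by positivity : (0:ℝ) < 1/ε)
      rwa [← Real.rpow_mul hp0, mul_one_div, div_self hε.ne', Real.rpow_one] at this
    have : (p:ℝ) < (P:ℝ) + 1 := lt_of_lt_of_le this
      ((Nat.le_ceil _).trans (by push_cast; linarith [Nat.le_ceil ((2:ℝ)^(1/ε))]))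
    rw [Finset.mem_range]
    exact_mod_cast Nat.lt_succ_of_le
      (by exact_mod_cast Nat.lt_succ_iff.mp (by exact_mod_cast this))
  calc (∏ p ∈ n.primeFactors, c p)
      = (∏ p ∈ n.primeFactors.filter (fun p : ℕ => 2 ≤ (p:ℝ)^ε), c p)
        * ∏ p ∈ n.primeFactors.filter (fun p : ℕ => ¬ 2 ≤ (p:ℝ)^ε), c p := by
        rw [Finset.prod_filter_mul_prod_filter_not]
    _ = 1 * M ^ (n.primeFactors.filter (fun p : ℕ => ¬ 2 ≤ (p:ℝ)^ε)).card := by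
        rw [Finset.prod_eq_one (fun p hp => by
            simp only [hc]; exact if_pos (Finset.mem_filter.mp hp).2),
          Finset.prod_eq_pow_card (fun p hp => by
            simp only [hc]; exact if_neg (Finset.mem_filter.mp hp).2)]
    _ ≤ M ^ (P + 1) := by
        rw [one_mul]
        apply pow_le_pow_right₀ hM1
        exact (Finset.card_le_card hsub).trans (by simp)

private lemma count_resid (q H r : ℕ) (hq : 0 < q) (hr : r < q) (hqH : q ≤ H) :
    ((Finset.Icc 1 H).filter (fun a => a % q = r)).card
      = H / q + (if 1 ≤ r ∧ r ≤ H % q then 1 else 0) := by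
  rcases Nat.eq_zero_or_pos r with hr0 | hr1
  · subst hr0
    rw [if_neg (by omega), add_zero]
    have : (Finset.Icc 1 H).filter (fun a => a % q = 0) = (Finset.Ioc 0 H).filter (q ∣ ·) := by
      ext a
      simp only [Finset.mem_filter, Finset.mem_Icc, Finset.mem_Ioc]
      constructor
      · rintro ⟨⟨h1, h2⟩, h3⟩; exact ⟨⟨by omega, h2⟩, Nat.dvd_of_mod_eq_zero h3⟩
      · rintro ⟨⟨h1, h2⟩, h3⟩
        exact ⟨⟨by omega, h2⟩, Nat.eq_zero_of_dvd_of_lt h3 |> fun _ => Nat.mod_eq_zero_of_dvd h3⟩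
    rw [this]
    simpa using Nat.Ioc_filter_dvd_card_eq_div H q
  · have hrH : r ≤ H := le_trans hr.le hqH
    have himg : (Finset.Icc 1 H).filter (fun a => a % q = r)
        = (Finset.range ((H - r) / q + 1)).image (fun k => q * k + r) := by
      ext a
      simp only [Finset.mem_filter, Finset.mem_Icc, Finset.mem_image, Finset.mem_range,
        Nat.lt_succ_iff]
      constructor
      · rintro ⟨⟨h1, h2⟩, h3⟩
        have hda := Nat.div_add_mod a q
        refine ⟨a / q, ?_, by omega⟩
        rw [Nat.le_div_iff_mul_le hq]
        have : a / q * q = q * (a / q) := Nat.mul_comm _ _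
        omega
      · rintro ⟨k, hk, rfl⟩
        have hk' : q * k ≤ H - r := by
          calc q * k ≤ q * ((H - r)/q) := Nat.mul_le_mul_left q hk
            _ ≤ H - r := Nat.mul_div_le _ _
        refine ⟨⟨by omega, by omega⟩, ?_⟩
        rw [Nat.mul_add_mod, Nat.mod_eq_of_lt hr]
    have hinj : Function.Injective (fun k => q * k + r) := by
      intro a b hab
      have h1 : q * a + r = q * b + r := hab
      exact Nat.eq_of_mul_eq_mul_left hq (by omega)
    rw [himg, Finset.card_image_of_injective _ hinj, Finset.card_range]
    obtain ⟨d, m, hm, hdq, hH⟩ : ∃ d m, m < q ∧ 1 ≤ d ∧ H = q * d + m :=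
      ⟨H/q, H%q, Nat.mod_lt _ hq, (Nat.one_le_div_iff hq).mpr hqH, (Nat.div_add_mod H q).symm⟩
    subst hH
    rw [Nat.mul_add_div hq, Nat.mul_add_mod, Nat.div_eq_of_lt hm, Nat.mod_eq_of_lt hm, add_zero]
    by_cases hcase : r ≤ m
    · rw [if_pos ⟨hr1, hcase⟩]
      have e : q * d + m - r = q * d + (m - r) := by omega
      rw [e, Nat.mul_add_div hq, Nat.div_eq_of_lt (show m - r < q by omega)]
    · rw [if_neg (by omega)]
      obtain ⟨d', rfl⟩ : ∃ d', d = d' + 1 := ⟨d - 1, by omega⟩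
      have e : q * (d' + 1) + m - r = q * d' + (q + m - r) := by
        rw [Nat.mul_succ]; omega
      rw [e, Nat.mul_add_div hq, Nat.div_eq_of_lt (show q + m - r < q by omega)]

private lemma fract_iff_mod (x H q : ℕ) (hq : 0 < q) :
    (Int.fract ((x : ℝ) / (q : ℝ)) ≤ Int.fract ((H : ℝ) / (q : ℝ))) ↔ x % q ≤ H % q := by
  rw [Int.fract_div_natCast_eq_div_natCast_mod, Int.fract_div_natCast_eq_div_natCast_mod]
  rw [div_le_div_iff_of_pos_right (by exact_mod_cast hq : (0:ℝ) < q)]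
  exact_mod_cast Iff.rfl

private lemma delta_lemma (x H q j : ℕ) (hq : 0 < q) (hj : 1 ≤ j) (hjq : j < q)
    (hAB : ¬ ((1 ≤ (x + j) % q ∧ (x + j) % q ≤ H % q) ↔ (x % q ≤ H % q))) :
    ∃ j', 1 ≤ j' ∧ j' ≤ j ∧ ((x + j') % q = 0 ∨ (x + j') % q = (H % q + 1) % q) := by
  set r := x % q with hr
  set m := H % q with hm
  have hrq : r < q := Nat.mod_lt _ hq
  have hmod : ∀ t, t < q → (x + t) % q = (r + t) % q := by
    intro t ht
    rw [Nat.add_mod, Nat.mod_eq_of_lt ht]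
  by_cases hwrap : r + j < q
  · have hxj : (x + j) % q = r + j := by
      rw [hmod j hjq, Nat.mod_eq_of_lt hwrap]
    rw [hxj] at hAB
    by_cases hB : r ≤ m
    · have hA : ¬ (1 ≤ r + j ∧ r + j ≤ m) := fun hA => hAB (iff_of_true hA hB)
      have hgt : m < r + j := by omega
      refine ⟨m + 1 - r, by omega, by omega, Or.inr ?_⟩
      rw [hmod (m + 1 - r) (by omega)]
      congr 1
      omega
    · exfalso
      exact hAB (iff_of_false (by omega) hB)
  · refine ⟨q - r, by omega, by omega, Or.inl ?_⟩
    rw [hmod (q - r) (by omega)]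
    have : r + (q - r) = q := by omega
    rw [this, Nat.mod_self]

private lemma key_identity (h H x : ℕ) (hh : 0 < h) (f g' : ℕ → ℂ) :
    (∑ a ∈ Finset.Icc 1 H, ∑ q ∈ Finset.Ioc h H,
        g' q * ∑ n ∈ (Finset.Ioc x (x + h)).filter (fun n => n % q = a % q), f n)
      - ((∑ q ∈ Finset.Ioc h H, g' q * (H / q : ℕ))
          + ∑ q ∈ (Finset.Ioc h H).filter
              (fun q : ℕ => Int.fract ((x : ℝ) / (q : ℝ)) ≤ Int.fract ((H : ℝ) / (q : ℝ))), g' q) *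
          (∑ n ∈ Finset.Ioc x (x + h), f n)
    = ∑ q ∈ Finset.Ioc h H, g' q * ∑ n ∈ Finset.Ioc x (x + h),
        ((if 1 ≤ n % q ∧ n % q ≤ H % q then (1:ℂ) else 0)
          - (if x % q ≤ H % q then (1:ℂ) else 0)) * f n := by
  classical
  have hq0 : ∀ q ∈ Finset.Ioc h H, 0 < q := fun q hq =>
    hh.trans (Finset.mem_Ioc.mp hq).1
  have e1 : (∑ a ∈ Finset.Icc 1 H, ∑ q ∈ Finset.Ioc h H,
        g' q * ∑ n ∈ (Finset.Ioc x (x + h)).filter (fun n => n % q = a % q), f n)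
      = ∑ q ∈ Finset.Ioc h H, g' q * ∑ n ∈ Finset.Ioc x (x + h),
          (((H / q : ℕ) : ℂ) + (if 1 ≤ n % q ∧ n % q ≤ H % q then (1:ℂ) else 0)) * f n := by
    rw [Finset.sum_comm]
    refine Finset.sum_congr rfl (fun q hq => ?_)
    rw [← Finset.mul_sum]
    congr 1
    obtain ⟨hq1, hq2⟩ := Finset.mem_Ioc.mp hq
    have hq0' : 0 < q := hq0 q hq
    calc ∑ a ∈ Finset.Icc 1 H, ∑ n ∈ (Finset.Ioc x (x + h)).filter (fun n => n % q = a % q), f n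
        = ∑ a ∈ Finset.Icc 1 H, ∑ n ∈ Finset.Ioc x (x + h),
            if n % q = a % q then f n else 0 := by
          exact Finset.sum_congr rfl fun a _ => Finset.sum_filter _ _
      _ = ∑ n ∈ Finset.Ioc x (x + h), ∑ a ∈ Finset.Icc 1 H,
            if a % q = n % q then f n else 0 := by
          rw [Finset.sum_comm]
          exact Finset.sum_congr rfl fun n _ => Finset.sum_congr rfl fun a _ => by
            simp only [eq_comm]
      _ = ∑ n ∈ Finset.Ioc x (x + h),
            (((Finset.Icc 1 H).filter (fun a => a % q = n % q)).card : ℂ) * f n := by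
          exact Finset.sum_congr rfl fun n _ => by
            rw [← Finset.sum_filter, Finset.sum_const, nsmul_eq_mul]
      _ = ∑ n ∈ Finset.Ioc x (x + h),
            (((H / q : ℕ) : ℂ) + (if 1 ≤ n % q ∧ n % q ≤ H % q then (1:ℂ) else 0)) * f n := by
          refine Finset.sum_congr rfl fun n _ => ?_
          rw [count_resid q H (n % q) hq0' (Nat.mod_lt n hq0') hq2]
          norm_num [apply_ite (fun t : ℕ => (t : ℂ))]
  have e2 : ((∑ q ∈ Finset.Ioc h H, g' q * (H / q : ℕ))
        + ∑ q ∈ (Finset.Ioc h H).filter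
            (fun q : ℕ => Int.fract ((x : ℝ) / (q : ℝ)) ≤ Int.fract ((H : ℝ) / (q : ℝ))), g' q)
      = ∑ q ∈ Finset.Ioc h H,
          (g' q * ((H / q : ℕ) : ℂ) + (if x % q ≤ H % q then g' q else 0)) := by
    rw [Finset.sum_add_distrib]
    congr 1
    rw [← Finset.sum_filter]
    exact Finset.sum_congr (Finset.filter_congr fun q hq => by
      rw [fract_iff_mod x H q (hq0 q hq)]) fun _ _ => rfl
  rw [e1, e2, Finset.sum_mul, ← Finset.sum_sub_distrib]
  refine Finset.sum_congr rfl fun q hq => ?_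
  have expand1 : ∑ n ∈ Finset.Ioc x (x + h),
      (((H / q : ℕ) : ℂ) + (if 1 ≤ n % q ∧ n % q ≤ H % q then (1:ℂ) else 0)) * f n
      = ((H / q : ℕ) : ℂ) * (∑ n ∈ Finset.Ioc x (x + h), f n)
        + ∑ n ∈ Finset.Ioc x (x + h),
            (if 1 ≤ n % q ∧ n % q ≤ H % q then (1:ℂ) else 0) * f n := by
    rw [Finset.mul_sum, ← Finset.sum_add_distrib]
    exact Finset.sum_congr rfl fun n _ => by ring
  have expand2 : ∑ n ∈ Finset.Ioc x (x + h),
      ((if 1 ≤ n % q ∧ n % q ≤ H % q then (1:ℂ) else 0)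
        - (if x % q ≤ H % q then (1:ℂ) else 0)) * f n
      = (∑ n ∈ Finset.Ioc x (x + h),
            (if 1 ≤ n % q ∧ n % q ≤ H % q then (1:ℂ) else 0) * f n)
        - (if x % q ≤ H % q then (1:ℂ) else 0) * ∑ n ∈ Finset.Ioc x (x + h), f n := by
    rw [Finset.mul_sum, ← Finset.sum_sub_distrib]
    exact Finset.sum_congr rfl fun n _ => by ring
  have hite : (if x % q ≤ H % q then g' q else 0)
      = g' q * (if x % q ≤ H % q then (1:ℂ) else 0) := by
    split_ifs <;> ring
  rw [expand1, expand2, hite]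
  ring

end Aux

/-- First formula of the Pinch Lemma. -/
theorem pinch_lemma_first
    (h H Q x : ℕ → ℕ) (hh : ∀ i, 0 < h i) (hx : ∀ i, 0 < x i)
    (hhH : ∀ i, h i ≤ H i) (hHQ : ∀ i, H i < Q i)
    (hQx : (fun i => (Q i : ℝ)) =O[atTop] (fun i => (x i : ℝ)))
    (hHx : (fun i => (H i : ℝ)) =o[atTop] (fun i => (x i : ℝ)))
    (f g' : ℕ → ℂ) (hf : EssBdd f) (hg' : EssBdd g')
    (ε : ℝ) (hε : 0 < ε) :
    (fun i =>
        (∑ a ∈ Finset.Icc 1 (H i), ∑ q ∈ Finset.Ioc (h i) (H i),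
            g' q * ∑ n ∈ (Finset.Ioc (x i) (x i + h i)).filter (fun n => n % q = a % q), f n)
          - ((∑ q ∈ Finset.Ioc (h i) (H i), g' q * (H i / q : ℕ))
              + ∑ q ∈ (Finset.Ioc (h i) (H i)).filter
                  (fun q : ℕ => Int.fract ((x i : ℝ) / (q : ℝ)) ≤ Int.fract ((H i : ℝ) / (q : ℝ))), g' q) *
              (∑ n ∈ Finset.Ioc (x i) (x i + h i), f n))
      =O[atTop] (fun i => (x i : ℝ) ^ ε * (h i : ℝ) ^ 2) := by
  set ε₁ := ε / 3 with hε₁def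
  have hε₁ : 0 < ε₁ := by positivity
  obtain ⟨Cd, hCd1, hCd⟩ := divisor_bound ε₁ hε₁
  obtain ⟨Cf0, hCf0⟩ := hf ε₁ hε₁
  obtain ⟨Cg0, hCg0⟩ := hg' ε₁ hε₁
  set Cf := max Cf0 1 with hCfdef
  set Cg := max Cg0 1 with hCgdef
  have hCf1 : 1 ≤ Cf := le_max_right _ _
  have hCg1 : 1 ≤ Cg := le_max_right _ _
  have hCf : ∀ n : ℕ, 1 ≤ n → ‖f n‖ ≤ Cf * (n:ℝ) ^ ε₁ := fun n hn =>
    (hCf0 n hn).trans (mul_le_mul_of_nonneg_right (le_max_left _ _) (by positivity))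
  have hCg : ∀ n : ℕ, 1 ≤ n → ‖g' n‖ ≤ Cg * (n:ℝ) ^ ε₁ := fun n hn =>
    (hCg0 n hn).trans (mul_le_mul_of_nonneg_right (le_max_left _ _) (by positivity))
  rw [isBigO_iff]
  refine ⟨2 * Cd * Cg * Cf * (2:ℝ)^ε, ?_⟩
  have hev : ∀ᶠ i in atTop, 4 * H i ≤ x i := by
    filter_upwards [hHx.def (by norm_num : (0:ℝ) < 1/4)] with i hi
    have h1 : ‖(H i : ℝ)‖ = (H i : ℝ) := Real.norm_of_nonneg (by positivity)
    have h2 : ‖(x i : ℝ)‖ = (x i : ℝ) := Real.norm_of_nonneg (by positivity)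
    rw [h1, h2] at hi
    have : ((4 * H i : ℕ) : ℝ) ≤ ((x i : ℕ) : ℝ) := by push_cast; linarith
    exact_mod_cast this
  filter_upwards [hev] with i hx4

  rw [key_identity (h i) (H i) (x i) (hh i) f g']
  -- abbreviations
  set h' := h i
  set H' := H i
  set x' := x i
  have hh1 : 1 ≤ h' := hh i
  have hhH' : h' ≤ H' := hhH i
  have hH1 : 1 ≤ H' := le_trans hh1 hhH'
  have hx1 : 1 ≤ x' := by omega
  have hHx' : H' ≤ x' := by omega
  set X : ℝ := (x' : ℝ) with hXdef
  have hXpos : (0:ℝ) < X := by rw [hXdef]; exact_mod_cast (by omega : 0 < x')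
  set Y : ℝ := (2 * X) ^ ε₁ with hYdef
  have hYpos : (0:ℝ) < Y := by positivity
  -- the set of bad q
  have instD : DecidablePred (fun q => ∃ j ∈ Finset.Icc 1 h',
      (x' + j) % q = 0 ∨ (x' + j) % q = (H' % q + 1) % q) :=
    fun q => Finset.decidableExistsAndFinset
  set badQ : Finset ℕ := (Finset.Ioc h' H').filter
    (fun q => ∃ j ∈ Finset.Icc 1 h', (x' + j) % q = 0 ∨ (x' + j) % q = (H' % q + 1) % q)
    with hbadQ
  -- terms vanish off badQ
  have hzero : ∀ q ∈ Finset.Ioc h' H', q ∉ badQ →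
      (g' q * ∑ n ∈ Finset.Ioc x' (x' + h'),
        ((if 1 ≤ n % q ∧ n % q ≤ H' % q then (1:ℂ) else 0)
          - (if x' % q ≤ H' % q then (1:ℂ) else 0)) * f n) = 0 := by
    intro q hq hnq
    obtain ⟨hq1, hq2⟩ := Finset.mem_Ioc.mp hq
    have hq0 : 0 < q := lt_trans (by omega) hq1
    rw [mul_eq_zero]
    right
    apply Finset.sum_eq_zero
    intro n hn
    obtain ⟨hn1, hn2⟩ := Finset.mem_Ioc.mp hn
    obtain ⟨j, hj1, hj2, rfl⟩ : ∃ j, 1 ≤ j ∧ j ≤ h' ∧ n = x' + j :=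
      ⟨n - x', by omega, by omega, by omega⟩
    by_cases hiff : ((1 ≤ (x' + j) % q ∧ (x' + j) % q ≤ H' % q) ↔ (x' % q ≤ H' % q))
    · rw [if_congr hiff rfl rfl, sub_self, zero_mul]
    · exfalso
      apply hnq
      rw [hbadQ, Finset.mem_filter]
      obtain ⟨j', hj'1, hj'2, hj'3⟩ :=
        delta_lemma x' H' q j hq0 hj1 (by omega) hiff
      exact ⟨hq, j', Finset.mem_Icc.mpr ⟨hj'1, le_trans hj'2 hj2⟩, hj'3⟩
  rw [← Finset.sum_subset (Finset.filter_subset _ _) (fun q hq hnq => hzero q hq hnq)]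
  -- bound each factor
  have hn2x : ∀ n : ℕ, n ≤ 2 * x' → (n:ℝ) ^ ε₁ ≤ Y := by
    intro n hn
    rw [hYdef]
    apply Real.rpow_le_rpow (by positivity) _ hε₁.le
    rw [hXdef]
    exact_mod_cast hn
  have hfb : ∀ n ∈ Finset.Ioc x' (x' + h'), ‖f n‖ ≤ Cf * Y := by
    intro n hn
    obtain ⟨hn1, hn2⟩ := Finset.mem_Ioc.mp hn
    refine (hCf n (by omega)).trans ?_
    exact mul_le_mul_of_nonneg_left (hn2x n (by omega)) (by linarith)
  have hTb : ∀ q : ℕ, ‖∑ n ∈ Finset.Ioc x' (x' + h'),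
      ((if 1 ≤ n % q ∧ n % q ≤ H' % q then (1:ℂ) else 0)
        - (if x' % q ≤ H' % q then (1:ℂ) else 0)) * f n‖ ≤ (h' : ℝ) * (Cf * Y) := by
    intro q
    refine (norm_sum_le _ _).trans ?_
    have step : ∀ n ∈ Finset.Ioc x' (x' + h'),
        ‖((if 1 ≤ n % q ∧ n % q ≤ H' % q then (1:ℂ) else 0)
          - (if x' % q ≤ H' % q then (1:ℂ) else 0)) * f n‖ ≤ Cf * Y := by
      intro n hn
      rw [norm_mul]
      have hd1 : ‖(if 1 ≤ n % q ∧ n % q ≤ H' % q then (1:ℂ) else 0)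
          - (if x' % q ≤ H' % q then (1:ℂ) else 0)‖ ≤ 1 := by
        split_ifs <;> simp
      calc ‖_‖ * ‖f n‖ ≤ 1 * (Cf * Y) :=
            mul_le_mul hd1 (hfb n hn) (norm_nonneg _) zero_le_one
        _ = Cf * Y := one_mul _
    refine (Finset.sum_le_sum step).trans ?_
    rw [Finset.sum_const, Nat.card_Ioc, Nat.add_sub_cancel_left, nsmul_eq_mul]
  have hgb : ∀ q ∈ badQ, ‖g' q‖ ≤ Cg * Y := by
    intro q hq
    rw [hbadQ, Finset.mem_filter] at hq
    obtain ⟨hq1, hq2⟩ := Finset.mem_Ioc.mp hq.1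
    refine (hCg q (by omega)).trans ?_
    exact mul_le_mul_of_nonneg_left (hn2x q (by omega)) (by linarith)
  -- card of badQ
  have hcard : (badQ.card : ℝ) ≤ (h' : ℝ) * (2 * Cd * Y) := by
    have hsub : badQ ⊆ (Finset.Icc 1 h').biUnion
        (fun j => (x' + j).divisors ∪ (x' + j - (H' + 1)).divisors) := by
      intro q hq
      rw [hbadQ, Finset.mem_filter] at hq
      obtain ⟨hqIoc, j, hjm, hcase⟩ := hq
      obtain ⟨hq1, hq2⟩ := Finset.mem_Ioc.mp hqIoc
      obtain ⟨hj1, hj2⟩ := Finset.mem_Icc.mp hjm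
      rw [Finset.mem_biUnion]
      refine ⟨j, hjm, ?_⟩
      rw [Finset.mem_union]
      rcases hcase with hc0 | hc1
      · exact Or.inl (Nat.mem_divisors.mpr ⟨Nat.dvd_of_mod_eq_zero hc0, by omega⟩)
      · refine Or.inr (Nat.mem_divisors.mpr ⟨?_, by omega⟩)
        have hq2' : 2 ≤ q := by omega
        have hmeq : (H' + 1) % q = (x' + j) % q := by
          rw [Nat.add_mod H' 1 q, Nat.mod_eq_of_lt (show 1 < q by omega), hc1]
        exact (Nat.modEq_iff_dvd' (by omega)).mp hmeq
    have hNat : badQ.card ≤ ∑ j ∈ Finset.Icc 1 h',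
        ((x' + j).divisors ∪ (x' + j - (H' + 1)).divisors).card :=
      (Finset.card_le_card hsub).trans (Finset.card_biUnion_le)
    have hterm : ∀ j ∈ Finset.Icc 1 h',
        (((x' + j).divisors ∪ (x' + j - (H' + 1)).divisors).card : ℝ) ≤ 2 * Cd * Y := by
      intro j hjm
      obtain ⟨hj1, hj2⟩ := Finset.mem_Icc.mp hjm
      have t1 : ((x' + j).divisors.card : ℝ) ≤ Cd * Y := by
        refine (hCd (x' + j) (by omega)).trans ?_
        exact mul_le_mul_of_nonneg_left (hn2x _ (by omega)) (by linarith)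
      have t2 : (((x' + j - (H' + 1)).divisors).card : ℝ) ≤ Cd * Y := by
        refine (hCd (x' + j - (H' + 1)) (by omega)).trans ?_
        exact mul_le_mul_of_nonneg_left (hn2x _ (by omega)) (by linarith)
      calc (((x' + j).divisors ∪ (x' + j - (H' + 1)).divisors).card : ℝ)
          ≤ ((x' + j).divisors.card : ℝ) + ((x' + j - (H' + 1)).divisors.card : ℝ) := by
            exact_mod_cast Finset.card_union_le _ _
        _ ≤ Cd * Y + Cd * Y := add_le_add t1 t2
        _ = 2 * Cd * Y := by ring
    calc (badQ.card : ℝ)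
        ≤ ∑ j ∈ Finset.Icc 1 h',
            (((x' + j).divisors ∪ (x' + j - (H' + 1)).divisors).card : ℝ) := by
          exact_mod_cast hNat
      _ ≤ ∑ j ∈ Finset.Icc 1 h', (2 * Cd * Y) := Finset.sum_le_sum hterm
      _ = (h' : ℝ) * (2 * Cd * Y) := by
          rw [Finset.sum_const, Nat.card_Icc, Nat.add_sub_cancel, nsmul_eq_mul]
  -- put it together
  have hmain : ‖∑ q ∈ badQ, g' q * ∑ n ∈ Finset.Ioc x' (x' + h'),
      ((if 1 ≤ n % q ∧ n % q ≤ H' % q then (1:ℂ) else 0)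
        - (if x' % q ≤ H' % q then (1:ℂ) else 0)) * f n‖
      ≤ (badQ.card : ℝ) * ((Cg * Y) * ((h' : ℝ) * (Cf * Y))) := by
    refine (norm_sum_le _ _).trans ?_
    have step : ∀ q ∈ badQ, ‖g' q * ∑ n ∈ Finset.Ioc x' (x' + h'),
        ((if 1 ≤ n % q ∧ n % q ≤ H' % q then (1:ℂ) else 0)
          - (if x' % q ≤ H' % q then (1:ℂ) else 0)) * f n‖
        ≤ (Cg * Y) * ((h' : ℝ) * (Cf * Y)) := by
      intro q hq
      rw [norm_mul]
      exact mul_le_mul (hgb q hq) (hTb q) (norm_nonneg _) (by positivity)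
    refine (Finset.sum_le_sum step).trans ?_
    rw [Finset.sum_const, nsmul_eq_mul]
  refine hmain.trans ?_
  have hY3 : Y * Y * Y = (2:ℝ)^ε * X^ε := by
    rw [hYdef, ← Real.rpow_add (by positivity), ← Real.rpow_add (by positivity)]
    have : ε₁ + ε₁ + ε₁ = ε := by rw [hε₁def]; ring
    rw [this, Real.mul_rpow (by norm_num) (by positivity)]
  have hnorm : ‖X ^ ε * (h' : ℝ) ^ 2‖ = X ^ ε * (h' : ℝ) ^ 2 :=
    Real.norm_of_nonneg (by positivity)
  rw [hnorm]
  calc (badQ.card : ℝ) * ((Cg * Y) * ((h' : ℝ) * (Cf * Y)))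
      ≤ ((h' : ℝ) * (2 * Cd * Y)) * ((Cg * Y) * ((h' : ℝ) * (Cf * Y))) := by
        apply mul_le_mul_of_nonneg_right hcard (by positivity)
    _ = 2 * Cd * Cg * Cf * (Y * Y * Y) * (h' : ℝ)^2 := by ring
    _ = 2 * Cd * Cg * Cf * ((2:ℝ)^ε * X^ε) * (h' : ℝ)^2 := by rw [hY3]
    _ = 2 * Cd * Cg * Cf * (2:ℝ)^ε * (X ^ ε * (h' : ℝ) ^ 2) := by ring
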